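/- Every Godsil graph is a Tinhofer graph: if every equitable partition of the vertex set of a finite simple graph G is the orbit partition of some subgroup of Aut(G), then Tinhofer's individualization-refinement algorithm gives the correct isomorphism answer on input (G, H) for every graph H and all possible choices of individualized vertices. -/

import Mathlib

namespace ColorRef

variable {V W : Type}

/-- `crRel G c i u v` means vertices `u` and `v` get the same color in round `i`
of color refinement on `G` with initial coloring `c`. -/
def crRel (G : SimpleGraph V) {α : Type} (c : V → α) : ℕ → V → V → Prop
  | 0 => fun u v => c u = c v
  | (i + 1) => fun u v => crRel G c i u v ∧
      ∀ w : V, {a : V | G.Adj u a ∧ crRel G c i a w}.ncard =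
               {a : V | G.Adj v a ∧ crRel G c i a w}.ncard

/-- `u` and `v` get the same color in the stable coloring. -/
def stableRel (G : SimpleGraph V) {α : Type} (c : V → α) (u v : V) : Prop :=
  ∀ i : ℕ, crRel G c i u v

/-- `X` is a cell of the stable partition of `(G, c)`. -/
def IsCell (G : SimpleGraph V) {α : Type} (c : V → α) (X : Set V) : Prop :=
  ∃ u : V, X = {v : V | stableRel G c u v}

/-- The multisets of round-`i` colors on the two sides of the disjoint union `G ⊕g H`
coincide for every `i`, i.e. color refinement does not distinguish `G` and `H`. -/
def crIndist (G : SimpleGraph V) (cG : V → ℕ) (H : SimpleGraph W) (cH : W → ℕ) : Prop :=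
  ∀ (i : ℕ) (w : V ⊕ W),
    {u : V | crRel (G ⊕g H) (Sum.elim cG cH) i (Sum.inl u) w}.ncard =
    {v : W | crRel (G ⊕g H) (Sum.elim cG cH) i (Sum.inr v) w}.ncard

/-- `G` (with coloring `cG`) is amenable: any finite colored graph `H` that color
refinement fails to distinguish from `G` is color-preservingly isomorphic to `G`. -/
def Amenable (G : SimpleGraph V) (cG : V → ℕ) : Prop :=
  ∀ (W : Type) (_ : Fintype W) (H : SimpleGraph W) (cH : W → ℕ),
    crIndist G cG H cH → ∃ φ : G ≃g H, ∀ v : V, cH (φ v) = cG v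

/-! ### Induced subgraphs on cells and between cells -/

def CellEmpty (G : SimpleGraph V) (X : Set V) : Prop := ∀ u ∈ X, ∀ v ∈ X, ¬ G.Adj u v

def CellComplete (G : SimpleGraph V) (X : Set V) : Prop :=
  ∀ u ∈ X, ∀ v ∈ X, u ≠ v → G.Adj u v

/-- `G[X]` is a perfect matching `mK₂` on `X`. -/
def CellMatching (G : SimpleGraph V) (X : Set V) : Prop :=
  ∀ u ∈ X, {v : V | v ∈ X ∧ G.Adj u v}.ncard = 1

/-- `G[X]` is the complement of a perfect matching on `X`. -/
def CellCoMatching (G : SimpleGraph V) (X : Set V) : Prop :=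
  ∀ u ∈ X, {v : V | v ∈ X ∧ v ≠ u ∧ ¬ G.Adj u v}.ncard = 1

/-- `G[X]` is the 5-cycle (a 2-regular graph on 5 vertices). -/
def CellC5 (G : SimpleGraph V) (X : Set V) : Prop :=
  X.ncard = 5 ∧ ∀ u ∈ X, {v : V | v ∈ X ∧ G.Adj u v}.ncard = 2

/-- Condition A. -/
def CondA (G : SimpleGraph V) {α : Type} (c : V → α) : Prop :=
  ∀ X : Set V, IsCell G c X →
    CellEmpty G X ∨ CellComplete G X ∨ CellMatching G X ∨ CellCoMatching G X ∨ CellC5 G X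

def BipEmpty (G : SimpleGraph V) (X Y : Set V) : Prop := ∀ u ∈ X, ∀ v ∈ Y, ¬ G.Adj u v

def BipComplete (G : SimpleGraph V) (X Y : Set V) : Prop := ∀ u ∈ X, ∀ v ∈ Y, G.Adj u v

/-- `G[X,Y]` is a disjoint union of stars `sK_{1,t}` with centers `X` and leaves `Y`. -/
def BipStars (G : SimpleGraph V) (X Y : Set V) : Prop :=
  (∀ v ∈ Y, {u : V | u ∈ X ∧ G.Adj u v}.ncard = 1) ∧
  (∃ t : ℕ, ∀ u ∈ X, {v : V | v ∈ Y ∧ G.Adj u v}.ncard = t)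

/-- `G[X,Y]` is the bipartite complement of a disjoint union of stars with centers `X`. -/
def BipCoStars (G : SimpleGraph V) (X Y : Set V) : Prop :=
  (∀ v ∈ Y, {u : V | u ∈ X ∧ ¬ G.Adj u v}.ncard = 1) ∧
  (∃ t : ℕ, ∀ u ∈ X, {v : V | v ∈ Y ∧ ¬ G.Adj u v}.ncard = t)

/-- Condition B. -/
def CondB (G : SimpleGraph V) {α : Type} (c : V → α) : Prop :=
  ∀ X Y : Set V, IsCell G c X → IsCell G c Y → X ≠ Y →
    BipEmpty G X Y ∨ BipComplete G X Y ∨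
    BipStars G X Y ∨ BipStars G Y X ∨ BipCoStars G X Y ∨ BipCoStars G Y X

/-- A cell is heterogeneous if the graph it induces is neither complete nor empty. -/
def Hetero (G : SimpleGraph V) (X : Set V) : Prop :=
  ¬ CellEmpty G X ∧ ¬ CellComplete G X

/-- `{X, Y}` is an anisotropic edge of the cell graph. -/
def AnisoEdge (G : SimpleGraph V) {α : Type} (c : V → α) (X Y : Set V) : Prop :=
  IsCell G c X ∧ IsCell G c Y ∧ X ≠ Y ∧ ¬ BipEmpty G X Y ∧ ¬ BipComplete G X Y

/-- An anisotropic path in the cell graph, given as the list of its cells. -/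
def AnisoPath (G : SimpleGraph V) {α : Type} (c : V → α) (L : List (Set V)) : Prop :=
  (∀ X ∈ L, IsCell G c X) ∧ L.Nodup ∧ L.Chain' (AnisoEdge G c)

/-- Condition C: no uniform anisotropic path connects two heterogeneous cells. -/
def CondC (G : SimpleGraph V) {α : Type} (c : V → α) : Prop :=
  ¬ ∃ (X Y : Set V) (L : List (Set V)) (k : ℕ),
      AnisoPath G c (X :: (L ++ [Y])) ∧
      (∀ Z ∈ X :: (L ++ [Y]), Z.ncard = k) ∧
      Hetero G X ∧ Hetero G Y

/-- Condition D: the cell graph has no uniform anisotropic cycle. -/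
def CondD (G : SimpleGraph V) {α : Type} (c : V → α) : Prop :=
  ¬ ∃ (X : Set V) (L : List (Set V)) (k : ℕ),
      3 ≤ (X :: L).length ∧
      AnisoPath G c (X :: L) ∧
      List.Chain' (AnisoEdge G c) ((X :: L) ++ [X]) ∧
      (∀ Z ∈ X :: L, Z.ncard = k)

/-- Condition E: no anisotropic path `X Y₁ … Y_l Z` with `|X| < |Y₁| = … = |Y_l| > |Z|`
and no anisotropic cycle `X Y₁ … Y_l X` with `|X| < |Y₁| = … = |Y_l|`. -/
def CondE (G : SimpleGraph V) {α : Type} (c : V → α) : Prop :=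
  (¬ ∃ (X Z : Set V) (Ys : List (Set V)) (k : ℕ),
      Ys ≠ [] ∧
      AnisoPath G c (X :: (Ys ++ [Z])) ∧
      (∀ Y ∈ Ys, Y.ncard = k) ∧ X.ncard < k ∧ Z.ncard < k) ∧
  (¬ ∃ (X : Set V) (Ys : List (Set V)) (k : ℕ),
      2 ≤ Ys.length ∧
      AnisoPath G c (X :: Ys) ∧
      List.Chain' (AnisoEdge G c) ((X :: Ys) ++ [X]) ∧
      (∀ Y ∈ Ys, Y.ncard = k) ∧ X.ncard < k)

/-- Condition F: no anisotropic path `X Y₁ … Y_l` with `|X| < |Y₁| = … = |Y_l|`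
whose last cell `Y_l` is heterogeneous. -/
def CondF (G : SimpleGraph V) {α : Type} (c : V → α) : Prop :=
  ¬ ∃ (X : Set V) (Ys : List (Set V)) (Yl : Set V) (k : ℕ),
      Ys ≠ [] ∧
      AnisoPath G c (X :: Ys) ∧
      (∀ Y ∈ Ys, Y.ncard = k) ∧ X.ncard < k ∧
      Ys.getLast? = some Yl ∧ Hetero G Yl

/-- The type of cells of the stable partition. -/
def Cell (G : SimpleGraph V) {α : Type} (c : V → α) : Type := {X : Set V // IsCell G c X}

/-- The graph on the cells of `Π_G` formed by the anisotropic edges of the cell graph;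
its connected components are the anisotropic components of `C(G)`. -/
def anisoGraph (G : SimpleGraph V) {α : Type} (c : V → α) : SimpleGraph (Cell G c) where
  Adj A B := AnisoEdge G c A.val B.val
  symm := by
    constructor
    rintro A B ⟨h1, h2, h3, h4, h5⟩
    refine ⟨h2, h1, Ne.symm h3, fun h => h4 ?_, fun h => h5 ?_⟩
    · exact fun u hu v hv hadj => h v hv u hu hadj.symm
    · exact fun u hu v hv => (h v hv u hu).symm
  loopless := ⟨fun A h => h.2.2.1 rfl⟩

/-- Condition G: every anisotropic component is a tree, and rooting it at any cell `R`
of minimum cardinality in its component, `|X| ≤ |Y|` along edges directed away from `R`. -/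
def CondG (G : SimpleGraph V) {α : Type} (c : V → α) : Prop :=
  (anisoGraph G c).IsAcyclic ∧
  ∀ R X Y : Cell G c,
    (∀ Z : Cell G c, (anisoGraph G c).Reachable R Z → R.val.ncard ≤ Z.val.ncard) →
    (anisoGraph G c).Reachable R X →
    (anisoGraph G c).Adj X Y →
    (anisoGraph G c).dist R Y = (anisoGraph G c).dist R X + 1 →
    X.val.ncard ≤ Y.val.ncard

/-- Condition H: every anisotropic component contains at most one heterogeneous cell,
and such a cell has minimum cardinality within its component. -/
def CondH (G : SimpleGraph V) {α : Type} (c : V → α) : Prop :=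
  (∀ X Y : Cell G c, Hetero G X.val → Hetero G Y.val →
      (anisoGraph G c).Reachable X Y → X = Y) ∧
  (∀ X Z : Cell G c, Hetero G X.val →
      (anisoGraph G c).Reachable X Z → X.val.ncard ≤ Z.val.ncard)

/-! ### Matrices, fractional automorphisms and compactness -/

open Classical in
/-- The real adjacency matrix of `G`. -/
noncomputable def adjMat (G : SimpleGraph V) : Matrix V V ℝ :=
  Matrix.of fun u v => if G.Adj u v then (1 : ℝ) else 0

open Classical in
/-- The permutation matrix of a permutation `σ`. -/
noncomputable def permMat (σ : Equiv.Perm V) : Matrix V V ℝ :=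
  Matrix.of fun i j => if σ j = i then (1 : ℝ) else 0

def IsDoublyStochastic [Fintype V] (X : Matrix V V ℝ) : Prop :=
  (∀ i j, 0 ≤ X i j) ∧ (∀ i, ∑ j, X i j = 1) ∧ (∀ j, ∑ i, X i j = 1)

def IsAutomorphism (G : SimpleGraph V) (σ : Equiv.Perm V) : Prop :=
  ∀ u v : V, G.Adj (σ u) (σ v) ↔ G.Adj u v

/-- `X` is a convex combination of permutation matrices of automorphisms of `G`. -/
def IsConvexCombOfAut [Fintype V] (G : SimpleGraph V) (X : Matrix V V ℝ) : Prop :=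
  ∃ (s : Finset (Equiv.Perm V)) (w : Equiv.Perm V → ℝ),
    (∀ σ ∈ s, IsAutomorphism G σ) ∧ (∀ σ ∈ s, 0 ≤ w σ) ∧
    (∑ σ ∈ s, w σ) = 1 ∧ X = ∑ σ ∈ s, w σ • permMat σ

/-- `G` is compact: the polytope of fractional automorphisms of `G` is the convex hull
of the permutation matrices of automorphisms of `G`. -/
def CompactGraph [Fintype V] (G : SimpleGraph V) : Prop :=
  ∀ X : Matrix V V ℝ, IsDoublyStochastic X → adjMat G * X = X * adjMat G →
    IsConvexCombOfAut G X

/-! ### Equitable partitions, Godsil, Tinhofer, refinable, discrete, unigraphs -/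

/-- The partition given by the classes of the equivalence `r` is equitable. -/
def Equitable (G : SimpleGraph V) (r : V → V → Prop) : Prop :=
  ∀ u v w : V, r u v →
    {a : V | G.Adj u a ∧ r a w}.ncard = {a : V | G.Adj v a ∧ r a w}.ncard

/-- The partition given by `r` is the orbit partition of a subgroup of `Aut(G)`. -/
def IsOrbitPartition (G : SimpleGraph V) (r : V → V → Prop) : Prop :=
  ∃ S : Subgroup (Equiv.Perm V), (∀ σ ∈ S, IsAutomorphism G σ) ∧
    (∀ u v : V, r u v ↔ ∃ σ ∈ S, σ u = v)

/-- `G` is a Godsil graph. -/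
def Godsil (G : SimpleGraph V) : Prop :=
  ∀ r : V → V → Prop, Equivalence r → Equitable G r → IsOrbitPartition G r

open Classical in
/-- The coloring of the disjoint union after individualizing the pairs in `F`:
the `j`-th individualized pair gets fresh color `some j`, all other vertices keep
their (uniform) original color `none`. -/
noncomputable def tinColor (F : List (V × W)) : V ⊕ W → Option ℕ
  | Sum.inl u => F.findIdx? (fun p => decide (p.1 = u))
  | Sum.inr v => F.findIdx? (fun p => decide (p.2 = v))

/-- The stable coloring relation on `G ⊕g H` after individualizing the pairs in `F`. -/
def tinRel (G : SimpleGraph V) (H : SimpleGraph W) (F : List (V × W)) :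
    (V ⊕ W) → (V ⊕ W) → Prop :=
  stableRel (G ⊕g H) (tinColor F)

/-- The multisets of stable colors on the two sides agree after individualizing `F`. -/
def tinIndist (G : SimpleGraph V) (H : SimpleGraph W) (F : List (V × W)) : Prop :=
  ∀ w : V ⊕ W,
    {u : V | tinRel G H F (Sum.inl u) w}.ncard =
    {v : W | tinRel G H F (Sum.inr v) w}.ncard

/-- The pair `p` is a legal individualization choice at the stage reached after `F`. -/
def ValidStep (G : SimpleGraph V) (H : SimpleGraph W) (F : List (V × W)) (p : V × W) : Prop :=
  tinIndist G H F ∧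
  tinRel G H F (Sum.inl p.1) (Sum.inr p.2) ∧
  2 ≤ {u' : V | tinRel G H F (Sum.inl u') (Sum.inl p.1)}.ncard ∧
  2 ≤ {v' : W | tinRel G H F (Sum.inr v') (Sum.inr p.2)}.ncard

/-- `F` is a legal sequence of individualization choices of Tinhofer's algorithm. -/
def ValidRun (G : SimpleGraph V) (H : SimpleGraph W) (F : List (V × W)) : Prop :=
  ∀ j : Fin F.length, ValidStep G H (F.take j.val) (F.get j)

/-- After `F`, all stable color classes are singletons in `G` and in `H`. -/
def AllSingletons (G : SimpleGraph V) (H : SimpleGraph W) (F : List (V × W)) : Prop :=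
  (∀ u u' : V, tinRel G H F (Sum.inl u) (Sum.inl u') → u = u') ∧
  (∀ v v' : W, tinRel G H F (Sum.inr v) (Sum.inr v') → v = v')

/-- After `F`, Tinhofer's algorithm stops. -/
def TinTerminal (G : SimpleGraph V) (H : SimpleGraph W) (F : List (V × W)) : Prop :=
  ¬ tinIndist G H F ∨ AllSingletons G H F

/-- After `F`, Tinhofer's algorithm outputs "isomorphic": the color multisets agree,
all classes are singletons, and the color-matching map is an isomorphism. -/
def TinOutputIso (G : SimpleGraph V) (H : SimpleGraph W) (F : List (V × W)) : Prop :=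
  tinIndist G H F ∧ AllSingletons G H F ∧
  (∀ (u u' : V) (v v' : W), tinRel G H F (Sum.inl u) (Sum.inr v) →
     tinRel G H F (Sum.inl u') (Sum.inr v') → (G.Adj u u' ↔ H.Adj v v'))

/-- `G` is a Tinhofer graph: for every finite `H` and every legal complete run of
Tinhofer's individualization-refinement algorithm, the output is correct. -/
def Tinhofer (G : SimpleGraph V) : Prop :=
  ∀ (W : Type) (_ : Fintype W) (H : SimpleGraph W) (F : List (V × W)),
    ValidRun G H F → TinTerminal G H F →
    (TinOutputIso G H F ↔ Nonempty (G ≃g H))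

/-- `G` is refinable: its stable partition is the orbit partition of `Aut(G)`. -/
def Refinable (G : SimpleGraph V) : Prop :=
  ∀ u v : V, stableRel G (fun _ => (0 : ℕ)) u v ↔
    ∃ σ : Equiv.Perm V, IsAutomorphism G σ ∧ σ u = v

/-- `G` is discrete: the stable partition consists of singletons. -/
def Discrete (G : SimpleGraph V) : Prop :=
  ∀ u v : V, stableRel G (fun _ => (0 : ℕ)) u v → u = v

/-- `G` is a unigraph: it is determined up to isomorphism by its degree sequence. -/
def Unigraph (G : SimpleGraph V) : Prop :=
  ∀ (W : Type) (_ : Fintype W) (H : SimpleGraph W),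
    (∃ e : V ≃ W, ∀ v : V, {w : W | H.Adj (e v) w}.ncard = {u : V | G.Adj v u}.ncard) →
    Nonempty (G ≃g H)

/-! ### Concrete graphs -/

/-- The cycle graph on `n` vertices. -/
def cycleG (n : ℕ) : SimpleGraph (Fin n) :=
  SimpleGraph.fromRel (fun u v => (u.val + 1) % n = v.val)

/-- The Petersen graph as the Kneser graph `K(5,2)`. -/
def petersen : SimpleGraph {s : Finset (Fin 5) // s.card = 2} where
  Adj a b := Disjoint a.val b.val
  symm := ⟨fun _ _ h => h.symm⟩
  loopless := by
    constructor
    intro a h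
    have h' : Disjoint a.val a.val := h
    rw [disjoint_self] at h'
    have h2 := a.2
    rw [h'] at h2
    simp at h2

/-- The Johnson graph `J(n,2)`. -/
def johnson (n : ℕ) : SimpleGraph {s : Finset (Fin n) // s.card = 2} where
  Adj a b := (a.val ∩ b.val).card = 1
  symm := by
    constructor
    intro a b h
    have h' : (a.val ∩ b.val).card = 1 := h
    show (b.val ∩ a.val).card = 1
    rwa [Finset.inter_comm]
  loopless := by
    constructor
    intro a h
    have h' : (a.val ∩ a.val).card = 1 := h
    rw [Finset.inter_self, a.2] at h'
    omega

/-- The cell (as an element of the cell type) containing vertex `u`. -/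
def vcell (G : SimpleGraph V) {α : Type} (c : V → α) (u : V) : Cell G c :=
  ⟨{v : V | stableRel G c u v}, ⟨u, rfl⟩⟩

/-- `u` and `v` lie in cells of the same anisotropic component. -/
def SameAnisoComp (G : SimpleGraph V) {α : Type} (c : V → α) (u v : V) : Prop :=
  (anisoGraph G c).Reachable (vcell G c u) (vcell G c v)

set_option linter.unusedSectionVars false

section Aux

variable {U : Type} {α : Type}

lemma crRel_refl (G : SimpleGraph U) (c : U → α) : ∀ (i : ℕ) (u : U), crRel G c i u u
  | 0, _ => rfl
  | (i+1), u => ⟨crRel_refl G c i u, fun _ => rfl⟩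

lemma crRel_symm (G : SimpleGraph U) (c : U → α) :
    ∀ (i : ℕ) {u v : U}, crRel G c i u v → crRel G c i v u
  | 0, _, _, h => h.symm
  | (i+1), _, _, h => ⟨crRel_symm G c i h.1, fun w => (h.2 w).symm⟩

lemma crRel_trans (G : SimpleGraph U) (c : U → α) :
    ∀ (i : ℕ) {u v w : U}, crRel G c i u v → crRel G c i v w → crRel G c i u w
  | 0, _, _, _, h, h' => h.trans h'
  | (i+1), _, _, _, h, h' => ⟨crRel_trans G c i h.1 h'.1, fun w => (h.2 w).trans (h'.2 w)⟩

lemma crRel_mono (G : SimpleGraph U) (c : U → α) {u v : U} :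
    ∀ {j i : ℕ}, i ≤ j → crRel G c j u v → crRel G c i u v
  | 0, i, hij, h => by rwa [Nat.le_zero.mp hij]
  | (j+1), i, hij, h => by
      rcases Nat.eq_or_lt_of_le hij with rfl | hlt
      · exact h
      · exact crRel_mono G c (Nat.lt_succ_iff.mp hlt) h.1

lemma stableRel_refl (G : SimpleGraph U) (c : U → α) (u : U) : stableRel G c u u :=
  fun i => crRel_refl G c i u

lemma stableRel_symm {G : SimpleGraph U} {c : U → α} {u v : U}
    (h : stableRel G c u v) : stableRel G c v u :=
  fun i => crRel_symm G c i (h i)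

lemma stableRel_trans {G : SimpleGraph U} {c : U → α} {u v w : U}
    (h : stableRel G c u v) (h' : stableRel G c v w) : stableRel G c u w :=
  fun i => crRel_trans G c i (h i) (h' i)

/-- one-directional transport of `crRel` along a color-preserving automorphism -/
lemma crRel_map (G : SimpleGraph U) (c : U → α) :
    ∀ (i : ℕ) (Φ : U ≃ U), (∀ x y, G.Adj (Φ x) (Φ y) ↔ G.Adj x y) →
      (∀ x, c (Φ x) = c x) → ∀ x y, crRel G c i x y → crRel G c i (Φ x) (Φ y) := by
  intro i
  induction i with
  | zero =>
    intro Φ hadj hc x y h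
    show c (Φ x) = c (Φ y)
    rw [hc x, hc y]; exact h
  | succ i ih =>
    intro Φ hadj hc x y h
    have hadj' : ∀ x y, G.Adj (Φ.symm x) (Φ.symm y) ↔ G.Adj x y := by
      intro x y
      conv_rhs => rw [← Φ.apply_symm_apply x, ← Φ.apply_symm_apply y]
      exact (hadj _ _).symm
    have hc' : ∀ x, c (Φ.symm x) = c x := by
      intro x
      conv_rhs => rw [← Φ.apply_symm_apply x]
      exact (hc _).symm
    have ihiff : ∀ a b, crRel G c i a b ↔ crRel G c i (Φ a) (Φ b) := by
      intro a b
      refine ⟨ih Φ hadj hc a b, fun hh => ?_⟩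
      have := ih Φ.symm hadj' hc' _ _ hh
      simpa using this
    refine ⟨ih Φ hadj hc x y h.1, fun w => ?_⟩
    have e : ∀ z : U, {a : U | G.Adj (Φ z) a ∧ crRel G c i a w}
        = Φ '' {a : U | G.Adj z a ∧ crRel G c i a (Φ.symm w)} := by
      intro z; ext b
      simp only [Set.mem_image, Set.mem_setOf_eq]
      constructor
      · rintro ⟨hb1, hb2⟩
        refine ⟨Φ.symm b, ⟨?_, ?_⟩, Φ.apply_symm_apply b⟩
        · rw [← hadj]; simpa using hb1
        · rw [ihiff]; simpa using hb2
      · rintro ⟨a, ⟨ha1, ha2⟩, rfl⟩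
        refine ⟨(hadj z a).mpr ha1, ?_⟩
        have := (ihiff a (Φ.symm w)).mp ha2
        simpa using this
    rw [e x, e y, Set.ncard_image_of_injective _ Φ.injective,
      Set.ncard_image_of_injective _ Φ.injective]
    exact h.2 (Φ.symm w)

/-- every vertex is `crRel`-related to its image under a color-preserving automorphism -/
lemma crRel_self_map (G : SimpleGraph U) (c : U → α) :
    ∀ (i : ℕ) (Φ : U ≃ U), (∀ x y, G.Adj (Φ x) (Φ y) ↔ G.Adj x y) →
      (∀ x, c (Φ x) = c x) → ∀ x, crRel G c i x (Φ x) := by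
  intro i
  induction i with
  | zero =>
    intro Φ hadj hc x
    show c x = c (Φ x)
    rw [hc x]
  | succ i ih =>
    intro Φ hadj hc x
    refine ⟨ih Φ hadj hc x, fun w => ?_⟩
    have e : {a : U | G.Adj (Φ x) a ∧ crRel G c i a w}
        = Φ '' {a : U | G.Adj x a ∧ crRel G c i a w} := by
      ext b
      simp only [Set.mem_image, Set.mem_setOf_eq]
      constructor
      · rintro ⟨hb1, hb2⟩
        refine ⟨Φ.symm b, ⟨?_, ?_⟩, Φ.apply_symm_apply b⟩
        · rw [← hadj]; simpa using hb1
        · have h3 : crRel G c i (Φ.symm b) b := by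
            have := ih Φ hadj hc (Φ.symm b); simpa using this
          exact crRel_trans G c i h3 hb2
      · rintro ⟨a, ⟨ha1, ha2⟩, rfl⟩
        refine ⟨(hadj x a).mpr ha1, ?_⟩
        exact crRel_trans G c i (crRel_symm G c i (ih Φ hadj hc a)) ha2
    rw [e, Set.ncard_image_of_injective _ Φ.injective]

lemma exists_stable (G : SimpleGraph U) [Fintype U] (c : U → α) :
    ∃ N : ℕ, ∀ u v, stableRel G c u v ↔ crRel G c N u v := by
  classical
  have key : ∃ N, ∀ u v, crRel G c (N+1) u v ↔ crRel G c N u v := by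
    by_contra hcon
    push_neg at hcon
    set S : ℕ → Set (U × U) := fun i => {p | crRel G c i p.1 p.2} with hS
    have hss : ∀ i, S (i+1) ⊂ S i := by
      intro i
      obtain ⟨u, v, huv⟩ := hcon i
      constructor
      · intro p hp; exact hp.1
      · intro hsub
        rcases huv with ⟨h1, h2⟩ | ⟨h1, h2⟩
        · exact h2 h1.1
        · exact h1 (hsub (show (u,v) ∈ S i from h2))
    have hlt : ∀ i, (S (i+1)).ncard < (S i).ncard := fun i =>
      Set.ncard_lt_ncard (hss i) (Set.toFinite _)
    have hbound : ∀ n, (S n).ncard + n ≤ (S 0).ncard := by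
      intro n; induction n with
      | zero => simp
      | succ n ihh => have := hlt n; omega
    have := hbound ((S 0).ncard + 1); omega
  obtain ⟨N, hN⟩ := key
  have hall : ∀ (k : ℕ) (u v : U), crRel G c (N + k) u v ↔ crRel G c N u v := by
    intro k
    induction k with
    | zero => intro u v; rfl
    | succ k ih =>
      intro u v
      have hset : ∀ (z : U) (w : U), {a : U | G.Adj z a ∧ crRel G c (N+k) a w}
          = {a : U | G.Adj z a ∧ crRel G c N a w} := by
        intro z w; ext a
        simp only [Set.mem_setOf_eq]
        exact and_congr_right fun _ => ih a w
      constructor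
      · rintro ⟨h1, h2⟩
        have h2' : ∀ w : U, {a : U | G.Adj u a ∧ crRel G c (N+k) a w}.ncard
            = {a : U | G.Adj v a ∧ crRel G c (N+k) a w}.ncard := h2
        refine (hN u v).mp ⟨(ih u v).mp h1, fun w => ?_⟩
        rw [← hset u w, ← hset v w]
        exact h2' w
      · intro h1
        have hc2 : ∀ w : U, {a : U | G.Adj u a ∧ crRel G c (N+k) a w}.ncard
            = {a : U | G.Adj v a ∧ crRel G c (N+k) a w}.ncard := by
          intro w
          rw [hset u w, hset v w]
          exact ((hN u v).mpr h1).2 w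
        exact ⟨(ih u v).mpr h1, hc2⟩
  refine ⟨N, fun u v => ⟨fun h => h N, fun h i => ?_⟩⟩
  rcases le_or_gt i N with hi | hi
  · exact crRel_mono G c hi h
  · have h2 : crRel G c (N + (i - N)) u v := (hall (i - N) u v).mpr h
    rwa [show N + (i - N) = i by omega] at h2

lemma stable_equitable (G : SimpleGraph U) [Fintype U] (c : U → α) :
    Equitable G (stableRel G c) := by
  obtain ⟨N, hN⟩ := exists_stable G c
  intro u v w huv
  have h1 : crRel G c (N+1) u v := huv (N+1)
  have hset : ∀ z : U, {a : U | G.Adj z a ∧ stableRel G c a w}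
      = {a : U | G.Adj z a ∧ crRel G c N a w} := by
    intro z; ext a
    simp only [Set.mem_setOf_eq]
    exact and_congr_right fun _ => hN a w
  rw [hset u, hset v]
  exact h1.2 w

lemma stableRel_self_map (G : SimpleGraph U) (c : U → α) (Φ : U ≃ U)
    (hadj : ∀ x y, G.Adj (Φ x) (Φ y) ↔ G.Adj x y) (hc : ∀ x, c (Φ x) = c x) (x : U) :
    stableRel G c x (Φ x) :=
  fun i => crRel_self_map G c i Φ hadj hc x

end Aux

section Tin

variable {V W : Type} [Fintype V] [Fintype W] {G : SimpleGraph V} {H : SimpleGraph W}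

/-- side-swapping equivalence of the disjoint union induced by `φ` -/
def swapEquiv (e : V ≃ W) : (V ⊕ W) ≃ (V ⊕ W) :=
  (Equiv.sumCongr e e.symm).trans (Equiv.sumComm W V)

@[simp] lemma swapEquiv_inl (e : V ≃ W) (u : V) : swapEquiv e (Sum.inl u) = Sum.inr (e u) := rfl

@[simp] lemma swapEquiv_inr (e : V ≃ W) (v : W) :
    swapEquiv e (Sum.inr v) = Sum.inl (e.symm v) := rfl

lemma swap_adj (φ : G ≃g H) : ∀ x y : V ⊕ W,
    (G ⊕g H).Adj (swapEquiv φ.toEquiv x) (swapEquiv φ.toEquiv y) ↔ (G ⊕g H).Adj x y := by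
  intro x y
  cases x <;> cases y <;>
    simp [swapEquiv, SimpleGraph.sum_adj, φ.map_adj_iff]
  exact φ.symm.map_adj_iff

lemma findIdx?_congr {β : Type} {p q : β → Bool} :
    ∀ (l : List β), (∀ x ∈ l, p x = q x) → l.findIdx? p = l.findIdx? q
  | [], _ => rfl
  | (x :: xs), h => by
    rw [List.findIdx?_cons, List.findIdx?_cons, h x (by simp),
      findIdx?_congr xs (fun y hy => h y (by simp [hy]))]

lemma tinColor_swap (φ : G ≃g H) (F : List (V × W)) (hF : ∀ p ∈ F, φ p.1 = p.2) :
    ∀ x : V ⊕ W, tinColor F (swapEquiv φ.toEquiv x) = tinColor F x := by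
  classical
  intro x
  cases x with
  | inl u =>
    show F.findIdx? (fun p => decide (p.2 = φ u)) = F.findIdx? (fun p => decide (p.1 = u))
    refine findIdx?_congr F (fun p hp => ?_)
    have h1 : φ p.1 = p.2 := hF p hp
    apply decide_eq_decide.mpr
    constructor
    · intro h2; exact φ.injective (by rw [h1, h2])
    · intro h2; rw [← h1, h2]
  | inr v =>
    show F.findIdx? (fun p => decide (p.1 = φ.symm v)) = F.findIdx? (fun p => decide (p.2 = v))
    refine findIdx?_congr F (fun p hp => ?_)
    have h1 : φ p.1 = p.2 := hF p hp
    apply decide_eq_decide.mpr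
    constructor
    · intro h2; rw [← h1, h2]; simp
    · intro h2; apply φ.injective; rw [h1, h2]; simp

lemma tinRel_refl (F : List (V × W)) (x : V ⊕ W) : tinRel G H F x x :=
  stableRel_refl _ _ x

lemma tinRel_symm {F : List (V × W)} {x y : V ⊕ W} (h : tinRel G H F x y) :
    tinRel G H F y x := stableRel_symm h

lemma tinRel_trans {F : List (V × W)} {x y z : V ⊕ W} (h : tinRel G H F x y)
    (h' : tinRel G H F y z) : tinRel G H F x z := stableRel_trans h h'

lemma tinRel_self (φ : G ≃g H) (F : List (V × W)) (hF : ∀ p ∈ F, φ p.1 = p.2) (u : V) :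
    tinRel G H F (Sum.inl u) (Sum.inr (φ u)) := by
  have := stableRel_self_map (G ⊕g H) (tinColor F) (swapEquiv φ.toEquiv)
    (swap_adj φ) (tinColor_swap φ F hF) (Sum.inl u)
  simpa [tinRel] using this

lemma tinColor_inl_eq {F : List (V × W)} {a b : V} (hb : ∃ p ∈ F, p.1 = b)
    (h : tinColor F (Sum.inl a) = tinColor F (Sum.inl b)) : a = b := by
  classical
  obtain ⟨p, hp, hpb⟩ := hb
  have hsome : F.findIdx? (fun q => decide (q.1 = b))
      = some (F.findIdx (fun q => decide (q.1 = b))) :=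
    List.findIdx?_eq_some_of_exists ⟨p, hp, by simp [hpb]⟩
  have h2 : F.findIdx? (fun q => decide (q.1 = a))
      = some (F.findIdx (fun q => decide (q.1 = b))) := by
    have ha : tinColor F (Sum.inl a) = F.findIdx? (fun q => decide (q.1 = a)) := rfl
    have hb' : tinColor F (Sum.inl b) = F.findIdx? (fun q => decide (q.1 = b)) := rfl
    rw [← ha, h, hb', hsome]
  obtain ⟨hj, hja, -⟩ := List.findIdx?_eq_some_iff_getElem.mp h2
  obtain ⟨hj', hjb, -⟩ := List.findIdx?_eq_some_iff_getElem.mp hsome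
  have h3 : (F[F.findIdx (fun q => decide (q.1 = b))]'hj).1 = a := by simpa using hja
  have h4 : (F[F.findIdx (fun q => decide (q.1 = b))]'hj).1 = b := by simpa using hjb
  rw [← h3, h4]

lemma tinRel_inl_equitable (G : SimpleGraph V) (H : SimpleGraph W) (F : List (V × W)) :
    Equitable G (fun u v => tinRel G H F (Sum.inl u) (Sum.inl v)) := by
  intro u v w huv
  have hequit := stable_equitable (G ⊕g H) (tinColor F)
    (Sum.inl u) (Sum.inl v) (Sum.inl w) huv
  have e : ∀ z : V, {a : V ⊕ W | (G ⊕g H).Adj (Sum.inl z) a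
        ∧ stableRel (G ⊕g H) (tinColor F) a (Sum.inl w)}
      = Sum.inl '' {a : V | G.Adj z a ∧ tinRel G H F (Sum.inl a) (Sum.inl w)} := by
    intro z; ext b
    cases b with
    | inl a =>
      simp only [Set.mem_image, Set.mem_setOf_eq, SimpleGraph.sum_adj]
      constructor
      · rintro ⟨h1, h2⟩; exact ⟨a, ⟨h1, h2⟩, rfl⟩
      · rintro ⟨a', ⟨h1, h2⟩, ha⟩
        cases Sum.inl_injective ha
        exact ⟨h1, h2⟩
    | inr b =>
      simp only [Set.mem_image, Set.mem_setOf_eq, SimpleGraph.sum_adj]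
      constructor
      · rintro ⟨h1, -⟩; exact absurd h1 (by simp)
      · rintro ⟨a', -, ha⟩; exact absurd ha (by simp)
  rw [e u, e v, Set.ncard_image_of_injective _ Sum.inl_injective,
    Set.ncard_image_of_injective _ Sum.inl_injective] at hequit
  exact hequit

lemma godsil_step (h : Godsil G) (φ : G ≃g H) (F : List (V × W))
    (hF : ∀ p ∈ F, φ p.1 = p.2) {u : V} {v : W}
    (huv : tinRel G H F (Sum.inl u) (Sum.inr v)) :
    ∃ ψ : G ≃g H, (∀ p ∈ F, ψ p.1 = p.2) ∧ ψ u = v := by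
  classical
  set r : V → V → Prop := fun a b => tinRel G H F (Sum.inl a) (Sum.inl b) with hr
  have hequiv : Equivalence r :=
    ⟨fun a => tinRel_refl F _, fun hab => tinRel_symm hab, fun hab hbc => tinRel_trans hab hbc⟩
  have hequit : Equitable G r := tinRel_inl_equitable G H F
  obtain ⟨S, hSaut, hSorb⟩ := h r hequiv hequit
  have h3 : tinRel G H F (Sum.inl (φ.symm v)) (Sum.inr v) := by
    have := tinRel_self φ F hF (φ.symm v)
    simpa using this
  have h2 : r u (φ.symm v) := tinRel_trans huv (tinRel_symm h3)
  obtain ⟨σ, hσS, hσu⟩ := (hSorb u (φ.symm v)).mp h2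
  have hσaut := hSaut σ hσS
  have hfix : ∀ p ∈ F, σ p.1 = p.1 := by
    intro p hp
    have hrp : r p.1 (σ p.1) := (hSorb p.1 (σ p.1)).mpr ⟨σ, hσS, rfl⟩
    have h0 : tinColor F (Sum.inl p.1) = tinColor F (Sum.inl (σ p.1)) := hrp 0
    exact tinColor_inl_eq ⟨p, hp, rfl⟩ h0.symm
  let σiso : G ≃g G := ⟨σ, by intro a b; exact hσaut a b⟩
  refine ⟨φ.comp σiso, fun p hp => ?_, ?_⟩
  · show φ (σ p.1) = p.2
    rw [hfix p hp]; exact hF p hp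
  · show φ (σ u) = v
    rw [hσu]; simp

lemma godsil_run (h : Godsil G) (φ0 : G ≃g H) (F : List (V × W))
    (hrun : ValidRun G H F) : ∃ φ : G ≃g H, ∀ p ∈ F, φ p.1 = p.2 := by
  suffices hn : ∀ n, n ≤ F.length → ∃ φ : G ≃g H, ∀ p ∈ F.take n, φ p.1 = p.2 by
    obtain ⟨φ, hφ⟩ := hn F.length le_rfl
    exact ⟨φ, by simpa using hφ⟩
  intro n
  induction n with
  | zero => exact fun _ => ⟨φ0, by simp⟩
  | succ n ih =>
    intro hn
    obtain ⟨φ, hφ⟩ := ih (Nat.le_of_succ_le hn)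
    have hstep := hrun ⟨n, hn⟩
    obtain ⟨ψ, hψ, hψu⟩ := godsil_step h φ (F.take n) hφ hstep.2.1
    refine ⟨ψ, fun p hp => ?_⟩
    rw [List.take_succ] at hp
    rcases List.mem_append.mp hp with hp1 | hp2
    · exact hψ p hp1
    · have hgl : F[n]? = some (F.get ⟨n, hn⟩) := by
        simp [List.getElem?_eq_getElem hn]
      rw [hgl] at hp2
      simp only [Option.toList_some, List.mem_singleton] at hp2
      subst hp2
      exact hψu

lemma godsil_indist (φ : G ≃g H) (F : List (V × W)) (hF : ∀ p ∈ F, φ p.1 = p.2) :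
    tinIndist G H F := by
  intro w
  have key : ∀ u : V, tinRel G H F (Sum.inl u) w ↔ tinRel G H F (Sum.inr (φ u)) w :=
    fun u => ⟨fun hh => tinRel_trans (tinRel_symm (tinRel_self φ F hF u)) hh,
      fun hh => tinRel_trans (tinRel_self φ F hF u) hh⟩
  have e : {v : W | tinRel G H F (Sum.inr v) w}
      = (fun u => φ u) '' {u : V | tinRel G H F (Sum.inl u) w} := by
    ext v
    simp only [Set.mem_image, Set.mem_setOf_eq]
    constructor
    · intro hv
      refine ⟨φ.symm v, (key _).mpr ?_, by simp⟩
      have : φ (φ.symm v) = v := by simp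
      rwa [this]
    · rintro ⟨u, hu, rfl⟩
      exact (key u).mp hu
  rw [e, Set.ncard_image_of_injective _ (fun a b hab => φ.injective hab)]

lemma output_iso {F : List (V × W)} (hout : TinOutputIso G H F) : Nonempty (G ≃g H) := by
  classical
  obtain ⟨hind, hsing, hiso⟩ := hout
  have hexu : ∀ u : V, ∃ v : W, tinRel G H F (Sum.inl u) (Sum.inr v) := by
    intro u
    have h1 := hind (Sum.inl u)
    have hset : {u' : V | tinRel G H F (Sum.inl u') (Sum.inl u)} = {u} := by
      ext u'
      simp only [Set.mem_setOf_eq, Set.mem_singleton_iff]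
      exact ⟨fun hh => hsing.1 u' u hh, fun hh => hh ▸ tinRel_refl F _⟩
    rw [hset, Set.ncard_singleton] at h1
    obtain ⟨v, hv⟩ := Set.ncard_eq_one.mp h1.symm
    have hvmem : tinRel G H F (Sum.inr v) (Sum.inl u) :=
      (Set.ext_iff.mp hv v).mpr rfl
    exact ⟨v, tinRel_symm hvmem⟩
  have hexv : ∀ v : W, ∃ u : V, tinRel G H F (Sum.inl u) (Sum.inr v) := by
    intro v
    have h1 := hind (Sum.inr v)
    have hset : {v' : W | tinRel G H F (Sum.inr v') (Sum.inr v)} = {v} := by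
      ext v'
      simp only [Set.mem_setOf_eq, Set.mem_singleton_iff]
      exact ⟨fun hh => hsing.2 v' v hh, fun hh => hh ▸ tinRel_refl F _⟩
    rw [hset, Set.ncard_singleton] at h1
    obtain ⟨u, hu⟩ := Set.ncard_eq_one.mp h1
    exact ⟨u, (Set.ext_iff.mp hu u).mpr rfl⟩
  choose f hf using hexu
  choose g hg using hexv
  have hgf : ∀ u, g (f u) = u := fun u =>
    hsing.1 (g (f u)) u (tinRel_trans (hg (f u)) (tinRel_symm (hf u)))
  have hfg : ∀ v, f (g v) = v := fun v =>
    hsing.2 (f (g v)) v (tinRel_trans (tinRel_symm (hf (g v))) (hg v))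
  refine ⟨⟨⟨f, g, hgf, hfg⟩, ?_⟩⟩
  intro a b
  exact (hiso a b (f a) (f b) (hf a) (hf b)).symm

end Tin


theorem godsil_tinhofer {V : Type} [Fintype V] (G : SimpleGraph V)
    (h : Godsil G) : Tinhofer G := by
  intro W instW H F hrun hterm
  constructor
  · intro hout
    exact output_iso hout
  · rintro ⟨φ0⟩
    obtain ⟨φ, hφ⟩ := godsil_run h φ0 F hrun
    have hind : tinIndist G H F := godsil_indist φ F hφ
    have hsing : AllSingletons G H F := by
      rcases hterm with h1 | h2
      · exact absurd hind h1
      · exact h2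
    refine ⟨hind, hsing, ?_⟩
    intro u u' v v' h1 h2
    have hv : v = φ u :=
      hsing.2 v (φ u) (tinRel_trans (tinRel_symm h1) (tinRel_self φ F hφ u))
    have hv' : v' = φ u' :=
      hsing.2 v' (φ u') (tinRel_trans (tinRel_symm h2) (tinRel_self φ F hφ u'))
    subst hv; subst hv'
    exact φ.map_adj_iff.symm


end ColorRef
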